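/- For integers 0 < ν < n and k ≥ 1, let C = {v ∈ ℝ^n, v ≠ 0 : v_i ≥ 0 for all 1 ≤ i ≤ ν, and ∑_{i=1}^ν v_i² ≥ ∑_{j=ν+1}^n v_j²} be the future causal cone of ℝ^{n−ν,ν}, T(x) = ∑_{i=1}^ν x_i, and τ(x) = T(x)^{2k+1}. Let p = 0 and q = e_n (the n-th standard basis vector). Then for every ε > 0 there exist finitely many points p = x_0, x_1, …, x_m = q in ℝ^n such that x_{l+1} − x_l ∈ C ∪ (−C) for every l, and ∑_l |τ(x_{l+1}) − τ(x_l)| < ε. Consequently the null distance on ℝ^{n−ν,ν} built from the time function τ = T^{2k+1} vanishes on the pair (p,q) and hence fails to be a metric. -/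

import Mathlib

open Finset

/-- The future causal cone of `ℝ^{n−ν,ν}`. -/
def flatFutureCone (n ν : ℕ) : Set (EuclideanSpace ℝ (Fin n)) :=
  {v | v ≠ 0 ∧ (∀ i : Fin n, (i : ℕ) < ν → 0 ≤ v i) ∧
    ∑ j ∈ Finset.univ.filter (fun j : Fin n => ¬ (j : ℕ) < ν), v j ^ 2 ≤
      ∑ i ∈ Finset.univ.filter (fun i : Fin n => (i : ℕ) < ν), v i ^ 2}

/-- The canonical time function `T(x) = ∑_{i<ν} xᵢ` of `ℝ^{n−ν,ν}`. -/
def flatTime (n ν : ℕ) (x : EuclideanSpace ℝ (Fin n)) : ℝ :=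
  ∑ i ∈ Finset.univ.filter (fun i : Fin n => (i : ℕ) < ν), x i

/-- Section 5.3 (degenerate null distance example): for `0 < ν < n` and `k ≥ 1`,
with `τ = T^{2k+1}`, `p = 0` and `q = e_n`, there are piecewise causal chains
from `p` to `q` of arbitrarily small null length; hence the null distance built
from the time function `τ` vanishes on `(p,q)` and fails to be a metric. -/
lemma single_mem_cone (n ν : ℕ) (hν : 0 < ν) (hn : ν < n) {δ : ℝ} (hδ : 0 < δ) :
    EuclideanSpace.single (⟨0, by omega⟩ : Fin n) δ ∈ flatFutureCone n ν := by
  refine ⟨?_, ?_, ?_⟩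
  · intro h
    have := congrArg (fun v : EuclideanSpace ℝ (Fin n) => v (⟨0, by omega⟩ : Fin n)) h
    simp [EuclideanSpace.single_apply] at this
    linarith
  · intro i hi
    simp [EuclideanSpace.single_apply]
    split <;> [linarith; rfl]
  · have h1 : ∑ j ∈ Finset.univ.filter (fun j : Fin n => ¬ (j : ℕ) < ν),
        (EuclideanSpace.single (⟨0, by omega⟩ : Fin n) δ) j ^ 2 = 0 := by
      apply Finset.sum_eq_zero
      intro j hj
      simp only [Finset.mem_filter, Finset.mem_univ, true_and] at hj
      have hne : j ≠ (⟨0, by omega⟩ : Fin n) := by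
        intro h; rw [h] at hj; simp at hj; omega
      rw [EuclideanSpace.single_apply, if_neg hne]
      ring
    rw [h1]
    positivity

lemma pair_mem_cone (n ν : ℕ) (hν : 0 < ν) (hn : ν < n) {δ : ℝ} (hδ : 0 < δ) :
    EuclideanSpace.single (⟨0, by omega⟩ : Fin n) δ +
      EuclideanSpace.single (⟨n - 1, by omega⟩ : Fin n) δ ∈ flatFutureCone n ν := by
  set i0 : Fin n := ⟨0, by omega⟩ with hi0
  set i1 : Fin n := ⟨n - 1, by omega⟩ with hi1
  have hne01 : i0 ≠ i1 := by
    intro h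
    have := congrArg Fin.val h
    simp [hi0, hi1] at this
    omega
  refine ⟨?_, ?_, ?_⟩
  · intro h
    have := congrArg (fun v : EuclideanSpace ℝ (Fin n) => v i0) h
    simp [EuclideanSpace.single_apply, hne01, if_neg hne01.symm] at this
    rcases this with h' | h' <;> linarith
  · intro i hi
    show (0:ℝ) ≤ (EuclideanSpace.single i0 δ) i + (EuclideanSpace.single i1 δ) i
    simp only [EuclideanSpace.single_apply]
    split <;> split <;> linarith
  · have hLHS : ∑ j ∈ Finset.univ.filter (fun j : Fin n => ¬ (j : ℕ) < ν),
        ((EuclideanSpace.single i0 δ + EuclideanSpace.single i1 δ) j) ^ 2 = δ ^ 2 := by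
      rw [Finset.sum_congr rfl (g := fun j => if j = i1 then δ ^ 2 else 0)]
      · rw [Finset.sum_ite_eq']
        simp only [Finset.mem_filter, Finset.mem_univ, true_and, hi1]
        rw [if_pos]
        omega
      · intro j hj
        simp only [Finset.mem_filter, Finset.mem_univ, true_and] at hj
        have hne : j ≠ i0 := by
          intro h; rw [h] at hj; simp [hi0] at hj; omega
        show ((EuclideanSpace.single i0 δ) j + (EuclideanSpace.single i1 δ) j) ^ 2 = _
        rw [EuclideanSpace.single_apply, EuclideanSpace.single_apply, if_neg hne]
        split <;> ring
    rw [hLHS]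
    have hmem : i0 ∈ Finset.univ.filter (fun i : Fin n => (i : ℕ) < ν) := by
      simp [hi0]; omega
    have happ : ((EuclideanSpace.single i0 δ + EuclideanSpace.single i1 δ) i0 : ℝ) = δ := by
      show ((EuclideanSpace.single i0 δ) i0 : ℝ) + ((EuclideanSpace.single i1 δ) i0 : ℝ) = δ
      rw [EuclideanSpace.single_apply, EuclideanSpace.single_apply, if_pos rfl,
        if_neg hne01]
      ring
    have hb := Finset.single_le_sum
      (f := fun i => ((EuclideanSpace.single i0 δ + EuclideanSpace.single i1 δ) i : ℝ) ^ 2)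
      (fun i _ => sq_nonneg _) hmem
    simp only [] at hb
    rw [happ] at hb
    exact hb

lemma flatTime_pair (n ν : ℕ) (hν : 0 < ν) (hn : ν < n) (a b : ℝ) :
    flatTime n ν (EuclideanSpace.single (⟨0, by omega⟩ : Fin n) a +
      EuclideanSpace.single (⟨n - 1, by omega⟩ : Fin n) b) = a := by
  set i0 : Fin n := ⟨0, by omega⟩ with hi0
  set i1 : Fin n := ⟨n - 1, by omega⟩ with hi1
  unfold flatTime
  rw [Finset.sum_congr rfl
      (g := fun i => (if i = i0 then a else 0) + (if i = i1 then b else 0))]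
  · rw [Finset.sum_add_distrib, Finset.sum_ite_eq', Finset.sum_ite_eq']
    simp only [Finset.mem_filter, Finset.mem_univ, true_and, hi0, hi1]
    rw [if_pos (by omega), if_neg (by omega)]
    ring
  · intro i _
    show (EuclideanSpace.single i0 a) i + (EuclideanSpace.single i1 b) i = _
    rw [EuclideanSpace.single_apply, EuclideanSpace.single_apply]

lemma sub_pair_eq (n ν : ℕ) (hν : 0 < ν) (hn : ν < n) (a b c d : ℝ) :
    (EuclideanSpace.single (⟨0, by omega⟩ : Fin n) a +
      EuclideanSpace.single (⟨n - 1, by omega⟩ : Fin n) b) -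
    (EuclideanSpace.single (⟨0, by omega⟩ : Fin n) c +
      EuclideanSpace.single (⟨n - 1, by omega⟩ : Fin n) d) =
    EuclideanSpace.single (⟨0, by omega⟩ : Fin n) (a - c) +
      EuclideanSpace.single (⟨n - 1, by omega⟩ : Fin n) (b - d) := by
  ext j
  simp only [PiLp.sub_apply, PiLp.add_apply, EuclideanSpace.single_apply]
  split_ifs <;> ring

lemma neg_pair_eq (n ν : ℕ) (hν : 0 < ν) (hn : ν < n) (a b : ℝ) :
    -(EuclideanSpace.single (⟨0, by omega⟩ : Fin n) a +
      EuclideanSpace.single (⟨n - 1, by omega⟩ : Fin n) b) =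
    EuclideanSpace.single (⟨0, by omega⟩ : Fin n) (-a) +
      EuclideanSpace.single (⟨n - 1, by omega⟩ : Fin n) (-b) := by
  ext j
  simp only [PiLp.neg_apply, PiLp.add_apply, EuclideanSpace.single_apply]
  split_ifs <;> ring

lemma single_pair_zero (n ν : ℕ) (hν : 0 < ν) (hn : ν < n) :
    EuclideanSpace.single (⟨0, by omega⟩ : Fin n) (0:ℝ) +
      EuclideanSpace.single (⟨n - 1, by omega⟩ : Fin n) (0:ℝ) = 0 := by
  ext j
  simp only [PiLp.add_apply, PiLp.zero_apply, EuclideanSpace.single_apply]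
  split_ifs <;> ring

lemma pair_zero_left (n ν : ℕ) (hν : 0 < ν) (hn : ν < n) (b : ℝ) :
    EuclideanSpace.single (⟨0, by omega⟩ : Fin n) (0:ℝ) +
      EuclideanSpace.single (⟨n - 1, by omega⟩ : Fin n) b =
    EuclideanSpace.single (⟨n - 1, by omega⟩ : Fin n) b := by
  ext j
  simp only [PiLp.add_apply, EuclideanSpace.single_apply]
  split_ifs <;> ring

lemma pair_zero_right (n ν : ℕ) (hν : 0 < ν) (hn : ν < n) (a : ℝ) :
    EuclideanSpace.single (⟨0, by omega⟩ : Fin n) a +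
      EuclideanSpace.single (⟨n - 1, by omega⟩ : Fin n) (0:ℝ) =
    EuclideanSpace.single (⟨0, by omega⟩ : Fin n) a := by
  ext j
  simp only [PiLp.add_apply, EuclideanSpace.single_apply]
  split_ifs <;> ring

theorem null_distance_degenerate_for_odd_powers (n ν k : ℕ) (hν : 0 < ν) (hn : ν < n)
    (hk : 1 ≤ k) :
    ∀ ε > (0 : ℝ), ∃ (m : ℕ) (x : Fin (m + 1) → EuclideanSpace ℝ (Fin n)),
      x 0 = 0 ∧
      x (Fin.last m) = EuclideanSpace.single (⟨n - 1, by omega⟩ : Fin n) (1 : ℝ) ∧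
      (∀ l : Fin m,
        x l.succ - x l.castSucc ∈ flatFutureCone n ν ∨
        -(x l.succ - x l.castSucc) ∈ flatFutureCone n ν) ∧
      ∑ l : Fin m,
        |flatTime n ν (x l.succ) ^ (2 * k + 1) -
          flatTime n ν (x l.castSucc) ^ (2 * k + 1)| < ε := by
  intro ε hε
  obtain ⟨N₀, hN₀⟩ := exists_nat_gt (2 / ε)
  set N : ℕ := N₀ + 1 with hNdef
  have hNpos : (0:ℝ) < N := by positivity
  have hN1 : (1:ℝ) ≤ N := by exact_mod_cast Nat.one_le_iff_ne_zero.mpr (by omega)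
  have hNgt : 2 / ε < (N:ℝ) := lt_of_lt_of_le hN₀ (by exact_mod_cast Nat.le_succ N₀)
  set δ : ℝ := (N:ℝ)⁻¹ with hδdef
  have hδpos : 0 < δ := by positivity
  set i0 : Fin n := ⟨0, by omega⟩ with hi0
  set i1 : Fin n := ⟨n - 1, by omega⟩ with hi1
  refine ⟨2 * N, fun l => EuclideanSpace.single i0 (if Even (l:ℕ) then 0 else δ) +
      EuclideanSpace.single i1 ((((l:ℕ) + 1) / 2 : ℕ) * δ), ?_, ?_, ?_, ?_⟩
  · beta_reduce
    have h0 : ((0 : Fin (2 * N + 1)) : ℕ) = 0 := rfl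
    rw [h0]
    norm_num
    exact single_pair_zero n ν hν hn
  · beta_reduce
    have h0 : ((Fin.last (2 * N)) : ℕ) = 2 * N := rfl
    rw [h0]
    have he : Even (2 * N) := even_two_mul N
    rw [if_pos he]
    have hb : (2 * N + 1) / 2 = N := by omega
    rw [hb]
    have : (N : ℝ) * δ = 1 := mul_inv_cancel₀ (by positivity)
    rw [this]
    exact pair_zero_left n ν hν hn 1
  · intro l
    beta_reduce
    have hsv : ((l.succ : Fin (2 * N + 1)) : ℕ) = (l:ℕ) + 1 := rfl
    have hcv : ((l.castSucc : Fin (2 * N + 1)) : ℕ) = (l:ℕ) := rfl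
    rw [hsv, hcv, sub_pair_eq n ν hν hn]
    rcases Nat.even_or_odd (l:ℕ) with he | ho
    · left
      have hne : ¬ Even ((l:ℕ) + 1) := by simp [Nat.even_add_one, he]
      have hmod : (l:ℕ) % 2 = 0 := Nat.even_iff.mp he
      have hb : ((l:ℕ) + 1 + 1) / 2 = ((l:ℕ) + 1) / 2 + 1 := by omega
      rw [if_neg hne, if_pos he, hb]
      have h1 : δ - 0 = δ := by ring
      have h2 : ((((l:ℕ) + 1) / 2 + 1 : ℕ) : ℝ) * δ - ((((l:ℕ) + 1) / 2 : ℕ) : ℝ) * δ = δ := by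
        push_cast
        ring
      rw [h1, h2]
      exact pair_mem_cone n ν hν hn hδpos
    · right
      have hne : ¬ Even (l:ℕ) := Nat.not_even_iff_odd.mpr ho
      have he1 : Even ((l:ℕ) + 1) := Nat.even_add_one.mpr hne
      have hmod : (l:ℕ) % 2 = 1 := Nat.odd_iff.mp ho
      have hb : ((l:ℕ) + 1 + 1) / 2 = ((l:ℕ) + 1) / 2 := by omega
      rw [if_pos he1, if_neg hne, hb]
      have h1 : (0:ℝ) - δ = -δ := by ring
      have h2 : ((((l:ℕ) + 1) / 2 : ℕ) : ℝ) * δ - ((((l:ℕ) + 1) / 2 : ℕ) : ℝ) * δ = 0 := by ring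
      rw [h1, h2, neg_pair_eq n ν hν hn, neg_neg, neg_zero, pair_zero_right n ν hν hn]
      exact single_mem_cone n ν hν hn hδpos
  · beta_reduce
    have hterm : ∀ l : Fin (2 * N),
        |flatTime n ν (EuclideanSpace.single i0
            (if Even ((l.succ : Fin (2 * N + 1)) : ℕ) then 0 else δ) +
          EuclideanSpace.single i1
            (((((l.succ : Fin (2 * N + 1)) : ℕ) + 1) / 2 : ℕ) * δ)) ^ (2 * k + 1) -
         flatTime n ν (EuclideanSpace.single i0
            (if Even ((l.castSucc : Fin (2 * N + 1)) : ℕ) then 0 else δ) +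
          EuclideanSpace.single i1
            (((((l.castSucc : Fin (2 * N + 1)) : ℕ) + 1) / 2 : ℕ) * δ)) ^ (2 * k + 1)|
        = δ ^ (2 * k + 1) := by
      intro l
      have hsv : ((l.succ : Fin (2 * N + 1)) : ℕ) = (l:ℕ) + 1 := rfl
      have hcv : ((l.castSucc : Fin (2 * N + 1)) : ℕ) = (l:ℕ) := rfl
      rw [hsv, hcv, flatTime_pair n ν hν hn, flatTime_pair n ν hν hn]
      have hδE : 0 < δ ^ (2 * k + 1) := pow_pos hδpos _
      rcases Nat.even_or_odd (l:ℕ) with he | ho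
      · have hne : ¬ Even ((l:ℕ) + 1) := by simp [Nat.even_add_one, he]
        rw [if_neg hne, if_pos he, zero_pow (by omega), sub_zero, abs_of_pos hδE]
      · have hne : ¬ Even (l:ℕ) := Nat.not_even_iff_odd.mpr ho
        have he1 : Even ((l:ℕ) + 1) := Nat.even_add_one.mpr hne
        rw [if_pos he1, if_neg hne, zero_pow (by omega), zero_sub, abs_neg, abs_of_pos hδE]
    rw [Finset.sum_congr rfl (fun l _ => hterm l), Finset.sum_const, Finset.card_univ,
      Fintype.card_fin, nsmul_eq_mul]
    have hsum : ((2 * N : ℕ) : ℝ) * δ ^ (2 * k + 1) = 2 * δ ^ (2 * k) := by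
      have hNδ : (N:ℝ) * δ = 1 := mul_inv_cancel₀ (ne_of_gt hNpos)
      rw [Nat.cast_mul, Nat.cast_ofNat, pow_succ,
        show ((2:ℝ) * N * (δ ^ (2*k) * δ)) = 2 * ((N:ℝ) * δ) * δ ^ (2*k) by ring, hNδ]
      ring
    rw [hsum]
    have hδle1 : δ ≤ 1 := by
      rw [hδdef]
      exact inv_le_one_of_one_le₀ hN1
    have hp : δ ^ (2 * k) ≤ δ ^ 1 :=
      pow_le_pow_of_le_one (le_of_lt hδpos) hδle1 (by omega)
    have h2N : 2 / (N:ℝ) < ε := by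
      rw [div_lt_iff₀ hNpos]
      rw [div_lt_iff₀ hε] at hNgt
      linarith
    have hfin : 2 * δ ^ (2 * k) ≤ 2 * δ := by
      have := mul_le_mul_of_nonneg_left hp (by norm_num : (0:ℝ) ≤ 2)
      simpa using this
    have hδeq : 2 * δ = 2 / (N:ℝ) := by rw [hδdef]; ring
    linarith
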